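/- The Max state is the n-fold tensor Fourier transform of the GHZ state: F^{⊗n}|GHZ⟩ₙ = |Max⟩ₙ. -/
import Mathlib


/-- The primitive `d`-th root of unity `q = exp(2πi/d)`. -/
noncomputable def qRoot (d : ℕ) : ℂ := Complex.exp (2 * Real.pi * Complex.I / d)

/-- The clock matrix `Z`, diagonal with entries `q^j`. -/
noncomputable def clockZ (d : ℕ) [NeZero d] : Matrix (ZMod d) (ZMod d) ℂ :=
  Matrix.diagonal fun j => qRoot d ^ j.val

/-- The shift matrix `X`, with `X_{j,k} = 1` iff `j = k + 1` in `ℤ/d`. -/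
def shiftX (d : ℕ) [NeZero d] : Matrix (ZMod d) (ZMod d) ℂ :=
  Matrix.of fun j k => if j = k + 1 then 1 else 0

/-- The discrete Fourier transform matrix `F`, with `F_{j,k} = q^{jk}/√d`. -/
noncomputable def dft (d : ℕ) [NeZero d] : Matrix (ZMod d) (ZMod d) ℂ :=
  Matrix.of fun j k => qRoot d ^ (j.val * k.val) / (Real.sqrt d : ℂ)

/-- The coefficient function of `|GHZ⟩ₙ = d^{-1/2} ∑_k |k,…,k⟩`. -/
noncomputable def ghzFun (d n : ℕ) [NeZero d] : (Fin n → ZMod d) → ℂ := fun k =>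
  ((Real.sqrt d : ℂ))⁻¹ * ∑ c : ZMod d, (if k = fun _ => c then 1 else 0)

/-- The coefficient function of `|Max⟩ₙ = d^{-(n-1)/2} ∑_{∑ kᵢ = 0} |k⟩`. -/
noncomputable def maxFun (d n : ℕ) [NeZero d] : (Fin n → ZMod d) → ℂ := fun k =>
  (((d : ℝ) ^ (((n : ℝ) - 1) / 2) : ℝ) : ℂ)⁻¹ * (if ∑ i, k i = 0 then 1 else 0)

lemma sum_zmod_pow_val (d : ℕ) [NeZero d] (x : ℂ) :
    ∑ c : ZMod d, x ^ c.val = ∑ i ∈ Finset.range d, x ^ i := by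
  refine Finset.sum_nbij' (fun c => c.val) (fun i => (i : ZMod d)) ?_ ?_ ?_ ?_ ?_
  · intro a _; exact Finset.mem_range.mpr (ZMod.val_lt a)
  · intro a _; exact Finset.mem_univ _
  · intro a _; simp
  · intro a ha; exact ZMod.val_natCast_of_lt (Finset.mem_range.mp ha)
  · intro a _; rfl

lemma sum_root_pow (d : ℕ) [NeZero d] (s : ZMod d) :
    ∑ c : ZMod d, qRoot d ^ (s.val * c.val) = if s = 0 then (d : ℂ) else 0 := by
  have hζ : IsPrimitiveRoot (qRoot d) d := Complex.isPrimitiveRoot_exp d (NeZero.ne d)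
  have h1 : qRoot d ^ d = 1 := hζ.pow_eq_one
  simp_rw [pow_mul]
  rw [sum_zmod_pow_val]
  by_cases hs : s = 0
  · simp [hs]
  · have hx1 : qRoot d ^ s.val ≠ 1 := by
      intro h
      have hdvd : d ∣ s.val := hζ.dvd_of_pow_eq_one _ h
      have : s.val = 0 := Nat.eq_zero_of_dvd_of_lt hdvd (ZMod.val_lt s)
      exact hs ((ZMod.val_eq_zero s).mp this)
    have hxd : (qRoot d ^ s.val) ^ d = 1 := by
      rw [← pow_mul, mul_comm, pow_mul, h1, one_pow]
    rw [geom_sum_eq hx1, hxd]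
    simp [hs]

lemma real_const (d n : ℕ) (hd : 0 < (d : ℝ)) :
    (Real.sqrt d)⁻¹ * ((d : ℝ) / (Real.sqrt d) ^ n) = ((d : ℝ) ^ (((n : ℝ) - 1) / 2))⁻¹ := by
  rw [Real.sqrt_eq_rpow, ← Real.rpow_natCast ((d:ℝ) ^ (1/2 : ℝ)) n, ← Real.rpow_mul hd.le,
    ← Real.rpow_neg hd.le, ← Real.rpow_neg hd.le]
  have h : (d : ℝ) / (d : ℝ) ^ (1/2 * (n:ℝ)) = (d : ℝ) ^ (1 - 1/2 * (n:ℝ)) := by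
    rw [Real.rpow_sub hd, Real.rpow_one]
  rw [h, ← Real.rpow_add hd]
  congr 1
  ring


/-- The `n`-fold tensor power `F^{⊗n}` of the discrete Fourier transform maps
`|GHZ⟩ₙ` to `|Max⟩ₙ`. -/
theorem dft_tensor_ghz_eq_max (d n : ℕ) [NeZero d] (hn : 1 ≤ n) :
    (fun k : Fin n → ZMod d =>
        ∑ k' : Fin n → ZMod d, (∏ i, dft d (k i) (k' i)) * ghzFun d n k') =
      maxFun d n := by
  have hζ : IsPrimitiveRoot (qRoot d) d := Complex.isPrimitiveRoot_exp d (NeZero.ne d)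
  have h1 : qRoot d ^ d = 1 := hζ.pow_eq_one
  funext k
  simp only [ghzFun, Finset.mul_sum, mul_ite, mul_one, mul_zero]
  rw [Finset.sum_comm]
  have hstep1 : ∀ c : ZMod d,
      (∑ k' : Fin n → ZMod d, if k' = fun _ => c then (∏ i, dft d (k i) (k' i)) * (√(d:ℝ) : ℂ)⁻¹ else 0)
        = (∏ i, dft d (k i) c) * (√(d:ℝ) : ℂ)⁻¹ := by
    intro c
    rw [Finset.sum_ite_eq' Finset.univ (fun _ => c)
      (fun k' => (∏ i, dft d (k i) (k' i)) * (√(d:ℝ) : ℂ)⁻¹)]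
    simp
  simp_rw [hstep1]
  have hprod : ∀ c : ZMod d, (∏ i, dft d (k i) c)
      = qRoot d ^ ((∑ i, k i).val * c.val) / (√(d:ℝ) : ℂ) ^ n := by
    intro c
    simp only [dft, Matrix.of_apply]
    rw [Finset.prod_div_distrib, Finset.prod_const, Finset.card_univ, Fintype.card_fin,
      Finset.prod_pow_eq_pow_sum]
    congr 1
    rw [pow_eq_pow_mod _ h1, pow_eq_pow_mod ((∑ i, k i).val * c.val) h1]
    congr 1
    have hv : (∑ i, k i).val = (∑ i, (k i).val) % d := by
      have h2 : (∑ i, k i) = ((∑ i, (k i).val : ℕ) : ZMod d) := by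
        rw [Nat.cast_sum]
        simp [ZMod.natCast_val, ZMod.cast_id]
      rw [h2, ZMod.val_natCast]
    rw [hv, ← Finset.sum_mul, Nat.mod_mul_mod]
  simp_rw [hprod, div_eq_mul_inv, ← Finset.sum_mul, sum_root_pow d (∑ i, k i)]
  have hd : 0 < (d : ℝ) := by exact_mod_cast Nat.pos_of_ne_zero (NeZero.ne d)
  by_cases hs : ∑ i, k i = 0
  · simp only [hs, maxFun, ite_true, eq_self_iff_true, if_true, mul_one]
    have h3 := real_const d n hd
    rw [div_eq_mul_inv] at h3
    have h4 : ((((d:ℝ) ^ (((n:ℝ)-1)/2) : ℝ)) : ℂ)⁻¹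
        = ((((Real.sqrt d)⁻¹ * ((d:ℝ) * ((Real.sqrt d)^n)⁻¹)) : ℝ) : ℂ) := by
      rw [h3, Complex.ofReal_inv]
    rw [h4]
    push_cast
    ring
  · simp [maxFun, hs]
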